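/- With the partition construction of G and B: Σ_{S : S induces a spanning tree of G and E_r ⊆ S} det(B_S) = Σ_{S ∈ 𝒞} det(A_S). -/

import Mathlib

open scoped Classical

/-- The principal minor of `A` on the index set `S` (equal to `1` when `S = ∅`). -/
noncomputable def principalMinor {ι : Type*} [DecidableEq ι]
    (A : Matrix ι ι ℝ) (S : Finset ι) : ℝ :=
  (A.submatrix (fun i : ↥S => (i : ι)) (fun i : ↥S => (i : ι))).det

/-- The edge of the graph `G` associated with an edge index in `Fin m ⊕ Fin m`:
the left edge `{v_{g j}, w_{g j, j}}` and the right edge `{w_{g j, j}, v_{g j + 1}}`. -/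
def partEdge {n m : ℕ} (g : Fin m → Fin n) : (Fin m ⊕ Fin m) → Sym2 (Fin (n + 1) ⊕ Fin m)
  | Sum.inl j => s(Sum.inl (g j).castSucc, Sum.inr j)
  | Sum.inr j => s(Sum.inr j, Sum.inl (g j).succ)

/-- The spanning subgraph of `G` whose edges are those indexed by `S ⊆ Fin m ⊕ Fin m`. -/
def partSubgraph {n m : ℕ} (g : Fin m → Fin n) (S : Finset (Fin m ⊕ Fin m)) :
    SimpleGraph (Fin (n + 1) ⊕ Fin m) :=
  SimpleGraph.fromEdgeSet (partEdge g '' ↑S)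

/-- The matrix `B` of the construction: the left-left block is `A`, the right-right block is
the identity, and the off-diagonal blocks vanish. -/
def matB {m : ℕ} (A : Matrix (Fin m) (Fin m) ℝ) :
    Matrix (Fin m ⊕ Fin m) (Fin m ⊕ Fin m) ℝ :=
  Matrix.of fun p q =>
    match p, q with
    | Sum.inl j₁, Sum.inl j₂ => A j₁ j₂
    | Sum.inr j, Sum.inr j' => if j = j' then 1 else 0
    | _, _ => 0

/-- The set `E_ℓ` of left edge indices. -/
def leftIdx (m : ℕ) : Finset (Fin m ⊕ Fin m) := Finset.univ.image Sum.inl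

/-- The set `E_r` of right edge indices. -/
def rightIdx (m : ℕ) : Finset (Fin m ⊕ Fin m) := Finset.univ.image Sum.inr


lemma partEdge_injective {n m : ℕ} (g : Fin m → Fin n) : Function.Injective (partEdge g) := by
  rintro (j₁|j₁) (j₂|j₂) h <;> simp [partEdge, Sym2.eq_iff] at h
  · rw [h.2]
  · obtain ⟨h1, rfl⟩ := h; exact absurd h1 (Fin.castSucc_lt_succ).ne
  · obtain ⟨rfl, h2⟩ := h; exact absurd h2 (Fin.castSucc_lt_succ).ne'
  · rw [h.1]

lemma partEdge_not_isDiag {n m : ℕ} (g : Fin m → Fin n) (x : Fin m ⊕ Fin m) :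
    ¬ (partEdge g x).IsDiag := by
  rcases x with j | j <;> simp [partEdge]

lemma partSubgraph_adj {n m : ℕ} (g : Fin m → Fin n) (S : Finset (Fin m ⊕ Fin m))
    {a b : Fin (n + 1) ⊕ Fin m} :
    (partSubgraph g S).Adj a b ↔ ∃ x ∈ S, partEdge g x = s(a, b) := by
  rw [partSubgraph, SimpleGraph.fromEdgeSet_adj]
  constructor
  · rintro ⟨⟨x, hx, he⟩, -⟩; exact ⟨x, hx, he⟩
  · rintro ⟨x, hx, he⟩
    refine ⟨⟨x, hx, he⟩, fun hab => partEdge_not_isDiag g x ?_⟩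
    rw [he, hab]; exact Sym2.mk_isDiag_iff.mpr rfl

lemma reach_invariant {V : Type*} {G : SimpleGraph V} (P : V → Prop)
    (h : ∀ a b, G.Adj a b → (P a ↔ P b)) {u v : V} (hr : G.Reachable u v) : P u ↔ P v := by
  obtain ⟨w⟩ := hr
  induction w with
  | nil => exact Iff.rfl
  | cons hadj _ ih => exact (h _ _ hadj).trans ih

lemma partSubgraph_edgeFinset {n m : ℕ} (g : Fin m → Fin n) (S : Finset (Fin m ⊕ Fin m)) :
    (partSubgraph g S).edgeFinset = S.image (partEdge g) := by
  ext e
  rw [SimpleGraph.mem_edgeFinset]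
  simp only [SimpleGraph.mem_edgeFinset, partSubgraph, SimpleGraph.edgeSet_fromEdgeSet,
    Set.mem_diff, Set.mem_image, Finset.mem_coe, Set.mem_setOf_eq, Finset.mem_image]
  constructor
  · rintro ⟨⟨x, hx, rfl⟩, -⟩; exact ⟨x, hx, rfl⟩
  · rintro ⟨x, hx, rfl⟩; exact ⟨⟨x, hx, rfl⟩, partEdge_not_isDiag g x⟩

lemma partSubgraph_card_edgeFinset {n m : ℕ} (g : Fin m → Fin n) (S : Finset (Fin m ⊕ Fin m)) :
    (partSubgraph g S).edgeFinset.card = S.card := by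
  rw [partSubgraph_edgeFinset, Finset.card_image_of_injective _ (partEdge_injective g)]

lemma partSubgraph_connected {n m : ℕ} (g : Fin m → Fin n) (S : Finset (Fin m ⊕ Fin m))
    (hr : ∀ j : Fin m, Sum.inr j ∈ S)
    (hex : ∀ i : Fin n, ∃ j : Fin m, Sum.inl j ∈ S ∧ g j = i) :
    (partSubgraph g S).Connected := by
  have adjL : ∀ j : Fin m, Sum.inl j ∈ S →
      (partSubgraph g S).Adj (Sum.inl (g j).castSucc) (Sum.inr j) := fun j hj =>
    (partSubgraph_adj g S).mpr ⟨Sum.inl j, hj, rfl⟩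
  have adjR : ∀ j : Fin m,
      (partSubgraph g S).Adj (Sum.inr j) (Sum.inl (g j).succ) := fun j =>
    (partSubgraph_adj g S).mpr ⟨Sum.inr j, hr j, rfl⟩
  have key : ∀ k : ℕ, ∀ hk : k < n + 1,
      (partSubgraph g S).Reachable (Sum.inl ⟨0, Nat.succ_pos n⟩) (Sum.inl ⟨k, hk⟩) := by
    intro k
    induction k with
    | zero => intro _; exact SimpleGraph.Reachable.refl _
    | succ k ih =>
      intro hk
      have hk' : k < n := by omega
      obtain ⟨j, hjS, hgj⟩ := hex ⟨k, hk'⟩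
      have h1 := adjL j hjS
      have h2 := adjR j
      rw [hgj] at h1 h2
      have e1 : (⟨k, hk'⟩ : Fin n).castSucc = ⟨k, by omega⟩ := rfl
      have e2 : (⟨k, hk'⟩ : Fin n).succ = ⟨k + 1, hk⟩ := rfl
      rw [e1] at h1
      rw [e2] at h2
      exact ((ih (by omega)).trans h1.reachable).trans h2.reachable
  rw [SimpleGraph.connected_iff]
  refine ⟨fun u v => ?_, ⟨Sum.inl 0⟩⟩
  have root : ∀ v, (partSubgraph g S).Reachable (Sum.inl ⟨0, Nat.succ_pos n⟩) v := by
    rintro (k | j)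
    · exact key k.1 k.2
    · exact (key ((g j).succ).1 ((g j).succ).2).trans (adjR j).reachable.symm
  exact (root u).symm.trans (root v)

lemma exists_left_of_connected {n m : ℕ} {g : Fin m → Fin n} {S : Finset (Fin m ⊕ Fin m)}
    (hc : (partSubgraph g S).Connected) (i : Fin n) :
    ∃ j : Fin m, Sum.inl j ∈ S ∧ g j = i := by
  by_contra hcon
  push_neg at hcon
  set P : (Fin (n + 1) ⊕ Fin m) → Prop := fun v =>
    match v with
    | Sum.inl k => (k : ℕ) ≤ (i : ℕ)
    | Sum.inr j => (g j : ℕ) < (i : ℕ) with hP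
  have inv : ∀ a b, (partSubgraph g S).Adj a b → (P a ↔ P b) := by
    intro a b hab
    obtain ⟨x, hxS, hx⟩ := (partSubgraph_adj g S).mp hab
    rcases x with j | j
    · have hne : (g j : ℕ) ≠ (i : ℕ) := fun h => hcon j hxS (Fin.ext h)
      rcases Sym2.eq_iff.mp hx with ⟨ha, hb⟩ | ⟨ha, hb⟩ <;> subst ha <;> subst hb <;>
        simp only [hP, Fin.coe_castSucc] <;> omega
    · rcases Sym2.eq_iff.mp hx with ⟨ha, hb⟩ | ⟨ha, hb⟩ <;> subst ha <;> subst hb <;>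
        simp only [hP, Fin.val_succ] <;> omega
  have := reach_invariant P inv (hc.preconnected (Sum.inl i.castSucc) (Sum.inl i.succ))
  simp only [hP, Fin.coe_castSucc, Fin.val_succ] at this
  omega

lemma no_reach {V : Type*} {G : SimpleGraph V} (P : V → Prop)
    (h : ∀ a b, G.Adj a b → (P a ↔ P b)) {u v : V} (hu : P u) (hv : ¬ P v) :
    ¬ G.Reachable u v := fun hr => hv ((reach_invariant P h hr).mp hu)

lemma deleted_adj {n m : ℕ} (g : Fin m → Fin n) (S : Finset (Fin m ⊕ Fin m))
    (x : Fin m ⊕ Fin m) {u v : Fin (n + 1) ⊕ Fin m} :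
    (partSubgraph g S \ SimpleGraph.fromEdgeSet {partEdge g x}).Adj u v ↔
      ∃ y ∈ S, y ≠ x ∧ partEdge g y = s(u, v) := by
  rw [SimpleGraph.sdiff_adj, SimpleGraph.fromEdgeSet_adj]
  constructor
  · rintro ⟨hadj, hne⟩
    obtain ⟨y, hyS, hy⟩ := (partSubgraph_adj g S).mp hadj
    have huv : u ≠ v := hadj.ne
    refine ⟨y, hyS, fun hyx => ?_, hy⟩
    exact hne ⟨by rw [← hy, hyx, Set.mem_singleton_iff], huv⟩
  · rintro ⟨y, hyS, hyx, hy⟩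
    refine ⟨(partSubgraph_adj g S).mpr ⟨y, hyS, hy⟩, fun ⟨hmem, _⟩ => ?_⟩
    rw [Set.mem_singleton_iff, ← hy] at hmem
    exact hyx (partEdge_injective g hmem)

lemma partSubgraph_acyclic {n m : ℕ} (g : Fin m → Fin n) (S : Finset (Fin m ⊕ Fin m))
    (huniq : ∀ j₁ j₂ : Fin m, Sum.inl j₁ ∈ S → Sum.inl j₂ ∈ S → g j₁ = g j₂ → j₁ = j₂) :
    (partSubgraph g S).IsAcyclic := by
  rw [SimpleGraph.isAcyclic_iff_forall_adj_isBridge]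
  intro a b hab
  obtain ⟨x, hxS, hx⟩ := (partSubgraph_adj g S).mp hab
  suffices h : (partSubgraph g S).IsBridge (partEdge g x) by rw [← hx]; exact h
  rcases x with j | j
  · -- left edge: s(inl (g j).castSucc, inr j)
    rw [show partEdge g (Sum.inl j) = s(Sum.inl (g j).castSucc, Sum.inr j) from rfl,
      SimpleGraph.isBridge_iff]
    set P : (Fin (n + 1) ⊕ Fin m) → Prop := fun v =>
      match v with
      | Sum.inl k => (k : ℕ) ≤ (g j : ℕ)
      | Sum.inr j' => (g j' : ℕ) < (g j : ℕ) with hP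
    refine no_reach P ?_ (by simp [hP]) (by simp [hP])
    intro u v huv
    obtain ⟨y, hyS, hyx, hy⟩ := (deleted_adj g S (Sum.inl j)).mp huv
    rcases y with j' | j'
    · have hne : (g j' : ℕ) ≠ (g j : ℕ) := fun h =>
        hyx (by rw [huniq j' j hyS hxS (Fin.ext h)])
      rcases Sym2.eq_iff.mp hy with ⟨h1, h2⟩ | ⟨h1, h2⟩ <;> subst h1 <;> subst h2 <;>
        simp only [hP, Fin.coe_castSucc] <;> omega
    · rcases Sym2.eq_iff.mp hy with ⟨h1, h2⟩ | ⟨h1, h2⟩ <;> subst h1 <;> subst h2 <;>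
        simp only [hP, Fin.val_succ] <;> omega
  · -- right edge: s(inr j, inl (g j).succ)
    rw [show partEdge g (Sum.inr j) = s(Sum.inr j, Sum.inl (g j).succ) from rfl,
      SimpleGraph.isBridge_iff]
    by_cases hjS : Sum.inl j ∈ S
    · set P : (Fin (n + 1) ⊕ Fin m) → Prop := fun v =>
        match v with
        | Sum.inl k => (k : ℕ) ≤ (g j : ℕ)
        | Sum.inr j' => if j' = j then True else (g j' : ℕ) < (g j : ℕ) with hP
      refine no_reach P ?_ (by simp [hP]) (by simp [hP])
      intro u v huv
      obtain ⟨y, hyS, hyx, hy⟩ := (deleted_adj g S (Sum.inr j)).mp huv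
      rcases y with j' | j'
      · by_cases hjj : j' = j
        · subst hjj
          rcases Sym2.eq_iff.mp hy with ⟨h1, h2⟩ | ⟨h1, h2⟩ <;> subst h1 <;> subst h2 <;>
            simp [hP]
        · have hne : (g j' : ℕ) ≠ (g j : ℕ) := fun h =>
            hjj (huniq j' j hyS hjS (Fin.ext h))
          rcases Sym2.eq_iff.mp hy with ⟨h1, h2⟩ | ⟨h1, h2⟩ <;> subst h1 <;> subst h2 <;>
            simp only [hP, Fin.coe_castSucc, if_neg hjj] <;> omega
      · have hjj : j' ≠ j := fun h => hyx (by rw [h])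
        rcases Sym2.eq_iff.mp hy with ⟨h1, h2⟩ | ⟨h1, h2⟩ <;> subst h1 <;> subst h2 <;>
          simp only [hP, Fin.val_succ, if_neg hjj] <;> omega
    · set P : (Fin (n + 1) ⊕ Fin m) → Prop := fun v => v = Sum.inr j with hP
      refine no_reach P ?_ (by simp [hP]) (by simp [hP])
      intro u v huv
      obtain ⟨y, hyS, hyx, hy⟩ := (deleted_adj g S (Sum.inr j)).mp huv
      rcases y with j' | j'
      · have hjj : j' ≠ j := fun h => hjS (h ▸ hyS)
        rcases Sym2.eq_iff.mp hy with ⟨h1, h2⟩ | ⟨h1, h2⟩ <;> subst h1 <;> subst h2 <;>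
          simp [hP, hjj]
      · have hjj : j' ≠ j := fun h => hyx (by rw [h])
        rcases Sym2.eq_iff.mp hy with ⟨h1, h2⟩ | ⟨h1, h2⟩ <;> subst h1 <;> subst h2 <;>
          simp [hP, hjj]



lemma mem_unionS {m : ℕ} (T : Finset (Fin m)) (x : Fin m ⊕ Fin m) :
    x ∈ rightIdx m ∪ T.image Sum.inl ↔
      (∃ j ∈ T, x = Sum.inl j) ∨ ∃ j : Fin m, x = Sum.inr j := by
  simp only [Finset.mem_union, rightIdx, Finset.mem_image, Finset.mem_univ, true_and]
  constructor
  · rintro (⟨j, rfl⟩ | ⟨j, hj, rfl⟩)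
    · exact Or.inr ⟨j, rfl⟩
    · exact Or.inl ⟨j, hj, rfl⟩
  · rintro (⟨j, hj, rfl⟩ | ⟨j, rfl⟩)
    · exact Or.inr ⟨j, hj, rfl⟩
    · exact Or.inl ⟨j, rfl⟩

noncomputable def unionEquiv {m : ℕ} (T : Finset (Fin m)) :
    (↥T ⊕ Fin m) ≃ ↥(rightIdx m ∪ T.image Sum.inl) where
  toFun := fun x =>
    match x with
    | Sum.inl t => ⟨Sum.inl t.1, (mem_unionS T _).mpr (Or.inl ⟨t.1, t.2, rfl⟩)⟩
    | Sum.inr j => ⟨Sum.inr j, (mem_unionS T _).mpr (Or.inr ⟨j, rfl⟩)⟩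
  invFun := fun x =>
    match x with
    | ⟨Sum.inl j, h⟩ => Sum.inl ⟨j, by
        rcases (mem_unionS T _).mp h with ⟨j', hj', he⟩ | ⟨j', he⟩
        · cases he; exact hj'
        · cases he⟩
    | ⟨Sum.inr j, _⟩ => Sum.inr j
  left_inv := by rintro (⟨t, ht⟩ | j) <;> rfl
  right_inv := by rintro ⟨(j | j), h⟩ <;> rfl

lemma minor_eq {m : ℕ} (A : Matrix (Fin m) (Fin m) ℝ) (T : Finset (Fin m)) :
    principalMinor (matB A) (rightIdx m ∪ T.image Sum.inl) = principalMinor A T := by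
  set S := rightIdx m ∪ T.image Sum.inl with hS
  have hsub : (matB A).submatrix (fun i : ↥S => (i : Fin m ⊕ Fin m))
      (fun i : ↥S => (i : Fin m ⊕ Fin m)) =
      (Matrix.fromBlocks
        (A.submatrix (fun t : ↥T => (t : Fin m)) (fun t : ↥T => (t : Fin m)))
        0 0 (1 : Matrix (Fin m) (Fin m) ℝ)).submatrix
        (unionEquiv T).symm (unionEquiv T).symm := by
    ext p q
    obtain ⟨(j | j), hp⟩ := p <;> obtain ⟨(j' | j'), hq⟩ := q <;>
      simp [unionEquiv, matB, Matrix.one_apply, Equiv.symm, Matrix.submatrix]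
  rw [principalMinor, hsub, Matrix.det_submatrix_equiv_self,
    Matrix.det_fromBlocks_zero₂₁, Matrix.det_one, mul_one, principalMinor]

lemma card_rightIdx {m : ℕ} : (rightIdx m).card = m := by
  rw [rightIdx, Finset.card_image_of_injective _ Sum.inr_injective, Finset.card_univ,
    Fintype.card_fin]

lemma disj_right_left {m : ℕ} (T : Finset (Fin m)) :
    Disjoint (rightIdx m) (T.image Sum.inl) := by
  rw [Finset.disjoint_left]
  rintro x hx hx'
  simp only [rightIdx, Finset.mem_image, Finset.mem_univ, true_and] at hx
  simp only [Finset.mem_image] at hx'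
  obtain ⟨j, rfl⟩ := hx
  obtain ⟨j', -, h⟩ := hx'
  exact Sum.inl_ne_inr h

lemma card_transversal {n m : ℕ} {g : Fin m → Fin n} {T : Finset (Fin m)}
    (h : ∀ i : Fin n, ∃! j : Fin m, j ∈ T ∧ g j = i) : T.card = n := by
  classical
  set s : Fin n → Fin m := fun i => (h i).exists.choose with hs
  have hspec : ∀ i, s i ∈ T ∧ g (s i) = i := fun i => (h i).exists.choose_spec
  have hT : T = Finset.univ.image s := by
    ext j
    simp only [Finset.mem_image, Finset.mem_univ, true_and]
    constructor
    · intro hj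
      exact ⟨g j, ((h (g j)).unique (hspec (g j)) ⟨hj, rfl⟩).symm ▸ rfl⟩
    · rintro ⟨i, rfl⟩; exact (hspec i).1
  have hinj : Function.Injective s := fun i₁ i₂ he => by
    have := (hspec i₁).2; rw [he, (hspec i₂).2] at this; exact this.symm
  rw [hT, Finset.card_image_of_injective _ hinj, Finset.card_univ, Fintype.card_fin]

lemma transversal_of_card {n m : ℕ} {g : Fin m → Fin n} {T : Finset (Fin m)}
    (hex : ∀ i : Fin n, ∃ j : Fin m, j ∈ T ∧ g j = i) (hcard : T.card = n) :
    ∀ i : Fin n, ∃! j : Fin m, j ∈ T ∧ g j = i := by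
  classical
  set s : Fin n → Fin m := fun i => (hex i).choose with hs
  have hspec : ∀ i, s i ∈ T ∧ g (s i) = i := fun i => (hex i).choose_spec
  have hinj : Function.Injective s := fun i₁ i₂ he => by
    have := (hspec i₁).2; rw [he, (hspec i₂).2] at this; exact this.symm
  have hsub : Finset.univ.image s ⊆ T := by
    intro j hj
    simp only [Finset.mem_image, Finset.mem_univ, true_and] at hj
    obtain ⟨i, rfl⟩ := hj; exact (hspec i).1
  have himg : Finset.univ.image s = T := by
    apply Finset.eq_of_subset_of_card_le hsub
    rw [Finset.card_image_of_injective _ hinj, Finset.card_univ, Fintype.card_fin, hcard]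
  intro i
  refine ⟨s i, hspec i, fun j ⟨hjT, hgj⟩ => ?_⟩
  rw [← himg] at hjT
  simp only [Finset.mem_image, Finset.mem_univ, true_and] at hjT
  obtain ⟨i', rfl⟩ := hjT
  rw [(hspec i').2] at hgj
  rw [hgj]

lemma mem_rightIdx {m : ℕ} (j : Fin m) : Sum.inr j ∈ rightIdx m := by
  simp [rightIdx]

/-- For the partition construction: the sum of `det (B_S)` over all `S` inducing a spanning
tree of `G` and containing `E_r` equals the sum of `det (A_T)` over all `T ∈ 𝒞`, the subsets
of `Fin m` meeting every fiber `P_i = g⁻¹(i)` in exactly one element. -/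
theorem part_sum_spanningTrees_eq_sum_transversals {n m : ℕ} (hn : 1 ≤ n) (hm : 1 ≤ m)
    (g : Fin m → Fin n) (hg : Function.Surjective g)
    (A : Matrix (Fin m) (Fin m) ℝ) (hA : A.PosSemidef) :
    ∑ S ∈ Finset.univ.filter (fun S : Finset (Fin m ⊕ Fin m) =>
        (partSubgraph g S).IsTree ∧ rightIdx m ⊆ S),
      principalMinor (matB A) S
    = ∑ T ∈ Finset.univ.filter (fun T : Finset (Fin m) =>
        ∀ i : Fin n, ∃! j : Fin m, j ∈ T ∧ g j = i),
      principalMinor A T := by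
  classical
  -- analysis of the left-hand side elements
  have decomp : ∀ S : Finset (Fin m ⊕ Fin m), (partSubgraph g S).IsTree → rightIdx m ⊆ S →
      (S = rightIdx m ∪ (Finset.univ.filter (fun j : Fin m => Sum.inl j ∈ S)).image Sum.inl
        ∧ ∀ i : Fin n, ∃! j : Fin m,
            j ∈ Finset.univ.filter (fun j : Fin m => Sum.inl j ∈ S) ∧ g j = i) := by
    intro S ht hrsub
    set T := Finset.univ.filter (fun j : Fin m => Sum.inl j ∈ S) with hT
    have hmemT : ∀ j : Fin m, j ∈ T ↔ Sum.inl j ∈ S := by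
      intro j; simp [hT]
    have hSdec : S = rightIdx m ∪ T.image Sum.inl := by
      ext x
      rw [mem_unionS]
      rcases x with j | j
      · constructor
        · intro hx; exact Or.inl ⟨j, (hmemT j).mpr hx, rfl⟩
        · rintro (⟨j', hj', he⟩ | ⟨j', he⟩)
          · cases he; exact (hmemT j).mp hj'
          · cases he
      · exact ⟨fun _ => Or.inr ⟨j, rfl⟩, fun _ => hrsub (mem_rightIdx j)⟩
    have hex : ∀ i : Fin n, ∃ j : Fin m, j ∈ T ∧ g j = i := by
      intro i
      obtain ⟨j, hjS, hgj⟩ := exists_left_of_connected ht.isConnected i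
      exact ⟨j, (hmemT j).mpr hjS, hgj⟩
    have hcardS : S.card = n + m := by
      have h1 := ht.card_edgeFinset
      rw [partSubgraph_card_edgeFinset] at h1
      have h2 : Fintype.card (Fin (n + 1) ⊕ Fin m) = n + 1 + m := by
        simp [Fintype.card_sum]
      omega
    have hcardT : T.card = n := by
      have h3 : S.card = m + T.card := by
        rw [hSdec, Finset.card_union_of_disjoint (disj_right_left T), card_rightIdx,
          Finset.card_image_of_injective _ Sum.inl_injective]
      omega
    exact ⟨hSdec, transversal_of_card hex hcardT⟩
  refine Finset.sum_nbij'
    (fun S => Finset.univ.filter (fun j : Fin m => Sum.inl j ∈ S))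
    (fun T => rightIdx m ∪ T.image Sum.inl) ?_ ?_ ?_ ?_ ?_
  · intro S hS
    rw [Finset.mem_filter] at hS ⊢
    exact ⟨Finset.mem_univ _, (decomp S hS.2.1 hS.2.2).2⟩
  · intro T hT
    rw [Finset.mem_filter] at hT ⊢
    obtain ⟨-, htrans⟩ := hT
    have hmemS : ∀ j : Fin m, Sum.inl j ∈ rightIdx m ∪ T.image Sum.inl ↔ j ∈ T := by
      intro j
      rw [mem_unionS]
      constructor
      · rintro (⟨j', hj', he⟩ | ⟨j', he⟩)
        · cases he; exact hj'
        · cases he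
      · intro hj; exact Or.inl ⟨j, hj, rfl⟩
    refine ⟨Finset.mem_univ _, ⟨?_, ?_⟩, Finset.subset_union_left⟩
    · refine partSubgraph_connected g _ (fun j => Finset.mem_union_left _ (mem_rightIdx j)) ?_
      intro i
      obtain ⟨j, hjT, hgj⟩ := (htrans i).exists
      exact ⟨j, (hmemS j).mpr hjT, hgj⟩
    · refine partSubgraph_acyclic g _ ?_
      intro j₁ j₂ h₁ h₂ hgg
      exact ((htrans (g j₂)).unique ⟨(hmemS j₁).mp h₁, hgg⟩ ⟨(hmemS j₂).mp h₂, rfl⟩)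
  · intro S hS
    rw [Finset.mem_filter] at hS
    exact ((decomp S hS.2.1 hS.2.2).1).symm
  · intro T hT
    ext j
    simp only [Finset.mem_filter, Finset.mem_univ, true_and, mem_unionS]
    constructor
    · rintro (⟨j', hj', he⟩ | ⟨j', he⟩)
      · cases he; exact hj'
      · cases he
    · intro hj; exact Or.inl ⟨j, hj, rfl⟩
  · intro S hS
    rw [Finset.mem_filter] at hS
    conv_lhs => rw [(decomp S hS.2.1 hS.2.2).1]
    exact minor_eq A _
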